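/- Let n ≥ 1 and T ≥ n be integers and let U = (ū_0,…,ū_T), Y = (ȳ_0,…,ȳ_T) be real data sequences. Let σ, M ∈ ℂ and suppose the set Σ_{U,Y} is nonempty. Then the inclusion Σ_{U,Y} ⊆ Σ_{σ,M} holds if and only if there exists ξ ∈ ℂ^{T−n+1} such that H_n(U)·ξ = γ_n(σ) and H_n(Y)·ξ = M·γ_n(σ). -/

import Mathlib

open Matrix

/-- The Hankel matrix of depth `n` (over `ℂ`) of a real data sequence `u = (u 0, …, u T)`:
its `(i,j)` entry is `u (i+j)`. -/
noncomputable def hankelC (u : ℕ → ℝ) (n T : ℕ) : Matrix (Fin (n + 1)) (Fin (T - n + 1)) ℂ :=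
  fun i j => (u ((i : ℕ) + (j : ℕ)) : ℂ)

/-- `γ_n(σ) = (1, σ, …, σ^n)ᵀ`. -/
noncomputable def gammaVec (n : ℕ) (σ : ℂ) : Fin (n + 1) → ℂ :=
  fun i => σ ^ (i : ℕ)

/-- A parameter row vector `θ = [q, -p] ∈ ℝ^{2n+1}` belongs to `Σ_{U,Y}`, i.e.
`[q -p]·[H_n(U); H̄_n(Y)] = [y_n ⋯ y_T]`. -/
def inSigmaUY (n T : ℕ) (u y : ℕ → ℝ) (θ : Fin (2 * n + 1) → ℝ) : Prop :=
  ∀ j : Fin (T - n + 1),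
    (∑ i : Fin (2 * n + 1),
      θ i * (if (i : ℕ) < n + 1 then u ((i : ℕ) + (j : ℕ))
             else y ((i : ℕ) - (n + 1) + (j : ℕ)))) = y (n + (j : ℕ))

/-- A parameter row vector `θ = [q, -p] ∈ ℝ^{2n+1}` belongs to `Σ_{σ,M}`, i.e.
`[q -p]·[γ_n(σ); M·γ_{n-1}(σ)] = M·σ^n`. -/
def inSigmaM (n : ℕ) (σ M : ℂ) (θ : Fin (2 * n + 1) → ℝ) : Prop :=
  (∑ i : Fin (2 * n + 1),
    (θ i : ℂ) * (if (i : ℕ) < n + 1 then σ ^ (i : ℕ)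
                 else M * σ ^ ((i : ℕ) - (n + 1)))) = M * σ ^ n

/-- The stacked matrix `[H_n(U); H_n(Y)]` over `ℂ`. -/
noncomputable def stackUY (u y : ℕ → ℝ) (n T : ℕ) :
    Matrix (Fin (n + 1) ⊕ Fin (n + 1)) (Fin (T - n + 1)) ℂ :=
  Matrix.fromRows (hankelC u n T) (hankelC y n T)

/-- The column `(0; γ_n(σ))`. -/
noncomputable def colZeroGamma (n : ℕ) (σ : ℂ) :
    Matrix (Fin (n + 1) ⊕ Fin (n + 1)) (Fin 1) ℂ :=
  Matrix.of fun i _ => Sum.elim (fun _ : Fin (n + 1) => (0 : ℂ)) (fun k : Fin (n + 1) => σ ^ (k : ℕ)) i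

/-- The column `(γ_n(σ); 0)`. -/
noncomputable def colGammaZero (n : ℕ) (σ : ℂ) :
    Matrix (Fin (n + 1) ⊕ Fin (n + 1)) (Fin 1) ℂ :=
  Matrix.of fun i _ => Sum.elim (fun k : Fin (n + 1) => σ ^ (k : ℕ)) (fun _ : Fin (n + 1) => (0 : ℂ)) i

/-- If `Σ_{U,Y}` is nonempty, then `Σ_{U,Y} ⊆ Σ_{σ,M}` holds
if and only if there exists `ξ ∈ ℂ^{T-n+1}` with `H_n(U)·ξ = γ_n(σ)` and
`H_n(Y)·ξ = M·γ_n(σ)`. -/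
lemma exists_solution_of_ker {m k : ℕ} (A : Fin m → Fin k → ℝ) (v : Fin m → ℝ)
    (h : ∀ η : Fin m → ℝ, (∀ j, ∑ i, η i * A i j = 0) → ∑ i, η i * v i = 0) :
    ∃ ξ : Fin k → ℝ, ∀ i, ∑ j, A i j * ξ j = v i := by
  classical
  set e : Fin m → (Fin m → ℝ) := fun i => Pi.single i 1 with he
  have hvW : v ∈ Submodule.span ℝ (Set.range fun j i => A i j) := by
    by_contra hv
    have hmk : Submodule.Quotient.mk (p := Submodule.span ℝ (Set.range fun j i => A i j)) v ≠ 0 := by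
      simpa [Submodule.Quotient.mk_eq_zero] using hv
    obtain ⟨g, hg⟩ := not_forall.mp
      (fun hall => hmk ((Module.forall_dual_apply_eq_zero_iff ℝ _).mp hall))
    set φ : (Fin m → ℝ) →ₗ[ℝ] ℝ :=
      g.comp (Submodule.span ℝ (Set.range fun j i => A i j)).mkQ with hφ
    have hφapp : ∀ w : Fin m → ℝ, φ w = ∑ i, w i * φ (e i) := by
      intro w
      have hw : w = ∑ i, w i • e i := by
        funext t
        simp [he, Pi.single_apply]
      calc φ w = φ (∑ i, w i • e i) := by rw [← hw]
        _ = ∑ i, w i * φ (e i) := by simp [smul_eq_mul]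
    have hker : ∀ j, ∑ i, (φ (e i)) * A i j = 0 := by
      intro j
      have hcol : (fun i => A i j) ∈ Submodule.span ℝ (Set.range fun j i => A i j) :=
        Submodule.subset_span ⟨j, rfl⟩
      have h0 : φ (fun i => A i j) = 0 := by
        simp [hφ, (Submodule.Quotient.mk_eq_zero _).mpr hcol]
      rw [hφapp] at h0
      rw [← h0]
      exact Finset.sum_congr rfl fun i _ => mul_comm _ _
    have hfin := h (fun i => φ (e i)) hker
    have hv0 : φ v = 0 := by
      rw [hφapp, ← hfin]
      exact Finset.sum_congr rfl fun i _ => mul_comm _ _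
    exact hg (by simpa [hφ] using hv0)
  obtain ⟨ξ, hξ⟩ := (Submodule.mem_span_range_iff_exists_fun ℝ).mp hvW
  refine ⟨ξ, fun i => ?_⟩
  have := congrFun hξ i
  simp only [Finset.sum_apply, Pi.smul_apply, smul_eq_mul] at this
  rw [← this]
  exact Finset.sum_congr rfl fun j _ => mul_comm _ _

theorem informativity_inclusion_iff (n T : ℕ) (hn : 1 ≤ n) (hT : n ≤ T)
    (u y : ℕ → ℝ) (σ M : ℂ)
    (hne : ∃ θ : Fin (2 * n + 1) → ℝ, inSigmaUY n T u y θ) :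
    (∀ θ : Fin (2 * n + 1) → ℝ, inSigmaUY n T u y θ → inSigmaM n σ M θ) ↔
      ∃ ξ : Fin (T - n + 1) → ℂ,
        (hankelC u n T).mulVec ξ = gammaVec n σ ∧
        (hankelC y n T).mulVec ξ = M • gammaVec n σ := by
  classical
  obtain ⟨θ₀, hθ₀⟩ := hne
  set A : Fin (2*n+1) → Fin (T-n+1) → ℝ := fun i j =>
    if (i:ℕ) < n+1 then u ((i:ℕ)+(j:ℕ)) else y ((i:ℕ)-(n+1)+(j:ℕ)) with hA
  set c : Fin (2*n+1) → ℂ := fun i =>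
    if (i:ℕ) < n+1 then σ^(i:ℕ) else M * σ^((i:ℕ)-(n+1)) with hc
  have hbgen : ∀ θ : Fin (2*n+1) → ℝ, inSigmaUY n T u y θ →
      ∀ j : Fin (T-n+1), ((y (n+(j:ℕ)) : ℝ):ℂ) = ∑ i, (θ i : ℂ) * (A i j : ℂ) := by
    intro θ hθ j
    have h1 : ∑ i, θ i * A i j = y (n+(j:ℕ)) := hθ j
    rw [← h1]
    push_cast
    rfl
  constructor
  · intro h
    have hM0 : ∑ i, (θ₀ i : ℂ) * c i = M * σ^n := h θ₀ hθ₀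
    have hlin : ∀ η : Fin (2*n+1) → ℝ, (∀ j, ∑ i, η i * A i j = 0) →
        ∑ i, (η i : ℂ) * c i = 0 := by
      intro η hη
      have hθη : inSigmaUY n T u y (θ₀ + η) := by
        intro j
        show ∑ i, (θ₀ i + η i) * A i j = y (n+(j:ℕ))
        have hsum : ∑ i, (θ₀ i + η i) * A i j = ∑ i, θ₀ i * A i j + ∑ i, η i * A i j := by
          rw [← Finset.sum_add_distrib]
          exact Finset.sum_congr rfl fun i _ => add_mul _ _ _
        have h1 : ∑ i, θ₀ i * A i j = y (n+(j:ℕ)) := hθ₀ j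
        rw [hsum, h1, hη j, add_zero]
      have hM1 : ∑ i, ((θ₀ i + η i : ℝ) : ℂ) * c i = M * σ^n := h _ hθη
      have hsplit : ∑ i, ((θ₀ i + η i : ℝ) : ℂ) * c i
          = ∑ i, (θ₀ i : ℂ) * c i + ∑ i, (η i : ℂ) * c i := by
        rw [← Finset.sum_add_distrib]
        refine Finset.sum_congr rfl fun i _ => ?_
        push_cast
        ring
      rw [hsplit, hM0] at hM1
      linear_combination hM1
    obtain ⟨ξR, hR⟩ := exists_solution_of_ker A (fun i => (c i).re) (by
      intro η hη
      have := congrArg Complex.re (hlin η hη)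
      simpa [Complex.re_sum, Complex.re_ofReal_mul] using this)
    obtain ⟨ξI, hI⟩ := exists_solution_of_ker A (fun i => (c i).im) (by
      intro η hη
      have := congrArg Complex.im (hlin η hη)
      simpa [Complex.im_sum, Complex.im_ofReal_mul] using this)
    set ξ : Fin (T-n+1) → ℂ := fun j => (ξR j : ℂ) + (ξI j : ℂ) * Complex.I with hξ
    have hcol : ∀ i, ∑ j, (A i j : ℂ) * ξ j = c i := by
      intro i
      have hstep : (∑ j, (A i j:ℂ) * ξ j)
          = ((∑ j, A i j * ξR j : ℝ) : ℂ) + ((∑ j, A i j * ξI j : ℝ) : ℂ) * Complex.I := by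
        rw [hξ]
        push_cast
        rw [Finset.sum_mul, ← Finset.sum_add_distrib]
        exact Finset.sum_congr rfl fun j _ => by ring
      rw [hstep, hR i, hI i, Complex.re_add_im]
    refine ⟨ξ, ?_, ?_⟩
    · funext k
      have hk2 : (k:ℕ) < 2*n + 1 := by omega
      have hcc := hcol ⟨(k:ℕ), hk2⟩
      have hk : (k:ℕ) < n + 1 := k.isLt
      show (hankelC u n T).mulVec ξ k = gammaVec n σ k
      simp only [Matrix.mulVec, dotProduct, hankelC, gammaVec]
      simpa [hA, hc, hk, Nat.lt_succ_iff.mp hk] using hcc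
    · funext k
      show (hankelC y n T).mulVec ξ k = (M • gammaVec n σ) k
      simp only [Matrix.mulVec, dotProduct, hankelC, gammaVec, Pi.smul_apply, smul_eq_mul]
      by_cases hk : (k:ℕ) < n
      · have hk2 : (k:ℕ) + (n+1) < 2*n + 1 := by omega
        have hcc := hcol ⟨(k:ℕ)+(n+1), hk2⟩
        have hnot : ¬ ((k:ℕ)+(n+1) < n+1) := by omega
        have hsub : (k:ℕ)+(n+1) - (n+1) = (k:ℕ) := by omega
        simp only [hA, hc, hnot, if_false, hsub] at hcc
        simpa using hcc
      · have hkn : (k:ℕ) = n := by omega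
        rw [hkn]
        calc ∑ j : Fin (T-n+1), ((y (n+(j:ℕ)):ℝ):ℂ) * ξ j
            = ∑ j : Fin (T-n+1), (∑ i, (θ₀ i:ℂ) * (A i j:ℂ)) * ξ j :=
              Finset.sum_congr rfl fun j _ => by rw [← hbgen θ₀ hθ₀ j]
          _ = ∑ j : Fin (T-n+1), ∑ i, (θ₀ i:ℂ) * (A i j:ℂ) * ξ j :=
              Finset.sum_congr rfl fun j _ => Finset.sum_mul _ _ _
          _ = ∑ i, ∑ j : Fin (T-n+1), (θ₀ i:ℂ) * (A i j:ℂ) * ξ j := Finset.sum_comm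
          _ = ∑ i, (θ₀ i:ℂ) * (∑ j, (A i j:ℂ) * ξ j) := by
              refine Finset.sum_congr rfl fun i _ => ?_
              rw [Finset.mul_sum]
              exact Finset.sum_congr rfl fun j _ => by ring
          _ = ∑ i, (θ₀ i:ℂ) * c i := Finset.sum_congr rfl fun i _ => by rw [hcol i]
          _ = M * σ^n := hM0
  · rintro ⟨ξ, hu, hy⟩ θ hθ
    show ∑ i, (θ i:ℂ) * c i = M * σ^n
    have hcol : ∀ i, c i = ∑ j, (A i j:ℂ) * ξ j := by
      intro i
      by_cases hi : (i:ℕ) < n+1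
      · have := congrFun hu ⟨(i:ℕ), hi⟩
        simp only [Matrix.mulVec, dotProduct, hankelC, gammaVec] at this
        rw [hc, hA]
        simp only [hi, if_true]
        exact this.symm
      · have hi2 : (i:ℕ) - (n+1) < n + 1 := by omega
        have := congrFun hy ⟨(i:ℕ)-(n+1), hi2⟩
        simp only [Matrix.mulVec, dotProduct, hankelC, gammaVec, Pi.smul_apply,
          smul_eq_mul] at this
        rw [hc, hA]
        simp only [hi, if_false]
        exact this.symm
    calc ∑ i, (θ i:ℂ) * c i
        = ∑ i, ∑ j, (θ i:ℂ) * ((A i j:ℂ) * ξ j) := by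
          refine Finset.sum_congr rfl fun i _ => ?_
          rw [hcol i, Finset.mul_sum]
      _ = ∑ j, (∑ i, (θ i:ℂ) * (A i j:ℂ)) * ξ j := by
          rw [Finset.sum_comm]
          refine Finset.sum_congr rfl fun j _ => ?_
          rw [Finset.sum_mul]
          exact Finset.sum_congr rfl fun i _ => by ring
      _ = ∑ j : Fin (T-n+1), ((y (n+(j:ℕ)) : ℝ):ℂ) * ξ j :=
          Finset.sum_congr rfl fun j _ => by rw [← hbgen θ hθ j]
      _ = M * σ^n := by
          have := congrFun hy ⟨n, by omega⟩
          simp only [Matrix.mulVec, dotProduct, hankelC, gammaVec, Pi.smul_apply,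
            smul_eq_mul] at this
          simpa using this
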